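/- Let 𝔸¹_ℤ be the set of multiplicative seminorms on the polynomial ring ℤ[X], equipped with the topology of pointwise convergence (as a subspace of the product space ℤ[X] → ℝ). Then: (1) 𝔸¹_ℤ is a second countable, locally compact, Hausdorff topological space; (2) the subset of ultrametric seminorms (those λ with λ(P+Q) ≤ max{λ(P), λ(Q)} for all P, Q) is closed in 𝔸¹_ℤ; and (3) for every M ∈ ℕ, the subset {λ ∈ 𝔸¹_ℤ : λ(X) ≤ M} is compact. -/

import Mathlib

/-- A multiplicative seminorm on a commutative unital ring. -/
def IsMultSeminorm {T : Type*} [CommRing T] (lam : T → ℝ) : Prop :=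
  (∀ x : T, 0 ≤ lam x) ∧ lam 0 = 0 ∧ lam 1 = 1 ∧
    (∀ x y : T, lam (x + y) ≤ lam x + lam y) ∧
    (∀ x y : T, lam (x * y) = lam x * lam y)

/-- The affine analytic space `𝔸¹_ℤ`: multiplicative seminorms on `ℤ[X]`, as a subspace of
the product space `ℤ[X] → ℝ` (topology of pointwise convergence). -/
def A1Z : Set (Polynomial ℤ → ℝ) := {lam | IsMultSeminorm lam}

instance : Countable (AddMonoidAlgebra ℤ ℕ) :=
  Function.Injective.countable (f := AddMonoidAlgebra.coeff)
    fun p q h => by cases p; cases q; simpa using h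

instance : Countable (Polynomial ℤ) :=
  Function.Injective.countable (f := Polynomial.toFinsupp)
    fun p q h => by cases p; cases q; simpa using h


section Aux

variable {f : Polynomial ℤ → ℝ} (hf : IsMultSeminorm f)

include hf

lemma msn_pow (p : Polynomial ℤ) (n : ℕ) : f (p ^ n) = f p ^ n := by
  induction n with
  | zero => simpa using hf.2.2.1
  | succ n ih => rw [pow_succ, pow_succ, hf.2.2.2.2, ih]

lemma msn_sum_le {ι : Type*} (s : Finset ι) (g : ι → Polynomial ℤ) :
    f (∑ i ∈ s, g i) ≤ ∑ i ∈ s, f (g i) := by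
  classical
  induction s using Finset.induction with
  | empty => simp [hf.2.1]
  | insert _ _ h ih =>
      rw [Finset.sum_insert h, Finset.sum_insert h]
      exact le_trans (hf.2.2.2.1 _ _) (by linarith)

lemma msn_nat_le (n : ℕ) : f (n : Polynomial ℤ) ≤ (n : ℝ) := by
  induction n with
  | zero => simp [hf.2.1]
  | succ n ih =>
      push_cast
      calc f ((n : Polynomial ℤ) + 1) ≤ f n + f 1 := hf.2.2.2.1 _ _
      _ ≤ n + 1 := by rw [hf.2.2.1]; linarith

lemma msn_neg_one : f (-1) = 1 := by
  have h2 : f (-1) * f (-1) = 1 := by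
    rw [← hf.2.2.2.2]; norm_num [hf.2.2.1]
  nlinarith [hf.1 (-1)]

lemma msn_int_le (n : ℤ) : f (n : Polynomial ℤ) ≤ |(n : ℝ)| := by
  rcases le_or_gt 0 n with h | h
  · lift n to ℕ using h
    simpa [abs_of_nonneg (by positivity : (0:ℝ) ≤ (n:ℝ))] using msn_nat_le hf n
  · obtain ⟨m, rfl⟩ : ∃ m : ℕ, n = -(m : ℤ) := ⟨(-n).toNat, by omega⟩
    have hn : ((-(m : ℤ) : ℤ) : Polynomial ℤ) = -1 * ((m : ℕ) : Polynomial ℤ) := by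
      push_cast; ring
    rw [hn, hf.2.2.2.2, msn_neg_one hf, one_mul]
    calc f ((m : ℕ) : Polynomial ℤ) ≤ (m : ℝ) := msn_nat_le hf m
    _ ≤ |((-(m : ℤ) : ℤ) : ℝ)| := by push_cast; rw [abs_neg, abs_of_nonneg] <;> positivity

/-- The key bound: if `f X ≤ M` then `f P` is bounded by an explicit constant. -/
lemma msn_bound (M : ℝ) (hM : f Polynomial.X ≤ M) (P : Polynomial ℤ) :
    f P ≤ (∑ i ∈ P.support, |(P.coeff i : ℝ)|) * max M 1 ^ P.natDegree := by
  have h1 : (1:ℝ) ≤ max M 1 := le_max_right _ _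
  have hfx : f Polynomial.X ≤ max M 1 := le_trans hM (le_max_left _ _)
  calc f P = f (∑ i ∈ P.support, Polynomial.C (P.coeff i) * Polynomial.X ^ i) := by
        conv_lhs => rw [P.as_sum_support_C_mul_X_pow]
  _ ≤ ∑ i ∈ P.support, f (Polynomial.C (P.coeff i) * Polynomial.X ^ i) := msn_sum_le hf _ _
  _ ≤ ∑ i ∈ P.support, |(P.coeff i : ℝ)| * max M 1 ^ P.natDegree := by
      apply Finset.sum_le_sum
      intro i hi
      rw [hf.2.2.2.2, msn_pow hf]
      have h2 : f (Polynomial.C (P.coeff i)) ≤ |(P.coeff i : ℝ)| := by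
        simpa [Polynomial.C_eq_intCast] using msn_int_le hf (P.coeff i)
      have h3 : f Polynomial.X ^ i ≤ max M 1 ^ P.natDegree :=
        le_trans (pow_le_pow_left₀ (hf.1 Polynomial.X) hfx i)
          (pow_le_pow_right₀ h1 (Polynomial.le_natDegree_of_mem_supp i hi))
      exact mul_le_mul h2 h3 (pow_nonneg (hf.1 Polynomial.X) i) (abs_nonneg _)
  _ = _ := by rw [Finset.sum_mul]

end Aux

lemma isClosed_msn : IsClosed {f : Polynomial ℤ → ℝ | IsMultSeminorm f} := by
  have : {f : Polynomial ℤ → ℝ | IsMultSeminorm f} =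
      (⋂ x : Polynomial ℤ, {f | 0 ≤ f x}) ∩ ({f | f 0 = 0} ∩ ({f | f 1 = 1} ∩
        ((⋂ x : Polynomial ℤ, ⋂ y : Polynomial ℤ, {f | f (x + y) ≤ f x + f y}) ∩
         (⋂ x : Polynomial ℤ, ⋂ y : Polynomial ℤ, {f | f (x * y) = f x * f y})))) := by
    ext f
    simp only [IsMultSeminorm, Set.mem_setOf_eq, Set.mem_inter_iff, Set.mem_iInter]
  rw [this]
  have c : ∀ p : Polynomial ℤ, Continuous fun f : Polynomial ℤ → ℝ => f p :=
    fun p => continuous_apply p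
  refine IsClosed.inter ?_ (IsClosed.inter ?_ (IsClosed.inter ?_ (IsClosed.inter ?_ ?_)))
  · exact isClosed_iInter fun x => isClosed_le continuous_const (c x)
  · exact isClosed_eq (c 0) continuous_const
  · exact isClosed_eq (c 1) continuous_const
  · exact isClosed_iInter fun x => isClosed_iInter fun y =>
      isClosed_le (c _) ((c x).add (c y))
  · exact isClosed_iInter fun x => isClosed_iInter fun y =>
      isClosed_eq (c _) ((c x).mul (c y))

lemma isCompact_ball (M : ℝ) :
    IsCompact {f : Polynomial ℤ → ℝ | IsMultSeminorm f ∧ f Polynomial.X ≤ M} := by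
  set B : Polynomial ℤ → ℝ := fun P =>
    (∑ i ∈ P.support, |(P.coeff i : ℝ)|) * max M 1 ^ P.natDegree with hB
  have hsub : {f : Polynomial ℤ → ℝ | IsMultSeminorm f ∧ f Polynomial.X ≤ M} ⊆
      Set.pi Set.univ (fun P => Set.Icc 0 (B P)) := by
    rintro f ⟨hf, hfM⟩ P _
    exact ⟨hf.1 P, msn_bound hf M hfM P⟩
  have hclosed : IsClosed {f : Polynomial ℤ → ℝ | IsMultSeminorm f ∧ f Polynomial.X ≤ M} := by
    have : {f : Polynomial ℤ → ℝ | IsMultSeminorm f ∧ f Polynomial.X ≤ M} =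
        {f : Polynomial ℤ → ℝ | IsMultSeminorm f} ∩ {f | f Polynomial.X ≤ M} := rfl
    rw [this]
    exact isClosed_msn.inter (isClosed_le (continuous_apply _) continuous_const)
  exact (isCompact_univ_pi fun P => isCompact_Icc).of_isClosed_subset hclosed hsub

/-- `𝔸¹_ℤ` is second countable, locally compact and Hausdorff; the ultrametric seminorms
form a closed subset; and for each `M ∈ ℕ` the set `{λ : λ(X) ≤ M}` is compact. -/
theorem A1Z_topology_properties :
    SecondCountableTopology A1Z ∧
      LocallyCompactSpace A1Z ∧
      T2Space A1Z ∧
      IsClosed {lam : A1Z | ∀ P Q : Polynomial ℤ,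
        (lam : Polynomial ℤ → ℝ) (P + Q)
          ≤ max ((lam : Polynomial ℤ → ℝ) P) ((lam : Polynomial ℤ → ℝ) Q)} ∧
      ∀ M : ℕ, IsCompact {lam : A1Z | (lam : Polynomial ℤ → ℝ) Polynomial.X ≤ (M : ℝ)} := by
  have hcomp : ∀ M : ℝ, IsCompact {lam : A1Z | (lam : Polynomial ℤ → ℝ) Polynomial.X ≤ M} := by
    intro M
    rw [Topology.IsEmbedding.isCompact_iff Topology.IsEmbedding.subtypeVal]
    have himg : Subtype.val '' {lam : A1Z | (lam : Polynomial ℤ → ℝ) Polynomial.X ≤ M} =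
        {f : Polynomial ℤ → ℝ | IsMultSeminorm f ∧ f Polynomial.X ≤ M} := by
      ext f
      constructor
      · rintro ⟨⟨g, hg⟩, hgM, rfl⟩; exact ⟨hg, hgM⟩
      · rintro ⟨hf, hfM⟩; exact ⟨⟨f, hf⟩, hfM, rfl⟩
    rw [himg]
    exact isCompact_ball M
  refine ⟨inferInstance, ?_, inferInstance, ?_, fun M => hcomp M⟩
  · haveI : WeaklyLocallyCompactSpace A1Z := by
      constructor
      intro lam
      refine ⟨{mu : A1Z | (mu : Polynomial ℤ → ℝ) Polynomial.X ≤ (lam : Polynomial ℤ → ℝ) Polynomial.X + 1},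
        hcomp _, ?_⟩
      have hopen : IsOpen {mu : A1Z |
          (mu : Polynomial ℤ → ℝ) Polynomial.X < (lam : Polynomial ℤ → ℝ) Polynomial.X + 1} :=
        (isOpen_lt (continuous_apply Polynomial.X) continuous_const).preimage continuous_subtype_val
      refine Filter.mem_of_superset (hopen.mem_nhds (by simp only [Set.mem_setOf_eq]; linarith)) ?_
      intro mu hmu
      simp only [Set.mem_setOf_eq] at hmu ⊢
      exact le_of_lt hmu
    infer_instance
  · have : {lam : A1Z | ∀ P Q : Polynomial ℤ,
        (lam : Polynomial ℤ → ℝ) (P + Q)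
          ≤ max ((lam : Polynomial ℤ → ℝ) P) ((lam : Polynomial ℤ → ℝ) Q)} =
        Subtype.val ⁻¹' (⋂ P : Polynomial ℤ, ⋂ Q : Polynomial ℤ,
          {f : Polynomial ℤ → ℝ | f (P + Q) ≤ max (f P) (f Q)}) := by
      ext lam; simp [Set.mem_iInter]
    rw [this]
    have c : ∀ p : Polynomial ℤ, Continuous fun f : Polynomial ℤ → ℝ => f p :=
      fun p => continuous_apply p
    exact (isClosed_iInter fun P => isClosed_iInter fun Q =>
      isClosed_le (c _) ((c P).max (c Q))).preimage continuous_subtype_val
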